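/- Fix r ∈ (0,1], λ > 0, and a positively oriented orthonormal basis {v₀, v₁, w} of ℝ³ (i.e., v₁ × v₀ = w). Define α(t) = √(1−r²)·w + r·cos(λt/r)·v₁ + r·sin(λt/r)·v₀. Then |α(t)| = 1 for all t, |α'(t)| = λ for all t, and α satisfies α''(t) = |α'(t)| k₀ (α(t) × α'(t)) − |α'(t)|² α(t) for all t, where k₀ = √(1−r²)/r. -/

import Mathlib

open Real MeasureTheory Filter

noncomputable def dot3 (u v : Fin 3 → ℝ) : ℝ := ∑ i, u i * v i

noncomputable def norm3 (u : Fin 3 → ℝ) : ℝ := Real.sqrt (dot3 u u)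

noncomputable def cross3 (u v : Fin 3 → ℝ) : Fin 3 → ℝ :=
  ![u 1 * v 2 - u 2 * v 1, u 2 * v 0 - u 0 * v 2, u 0 * v 1 - u 1 * v 0]

/-- Projection onto the orthogonal complement of `x`. -/
noncomputable def proj3 (x v : Fin 3 → ℝ) : Fin 3 → ℝ := v - dot3 v x • x

/-- Covariant derivative of a tangent field `V` along a sphere-valued curve `γ`
(tangential projection of the ambient derivative). -/
noncomputable def covDeriv (γ V : ℝ → Fin 3 → ℝ) : ℝ → Fin 3 → ℝ :=
  fun t => proj3 (γ t) (deriv V t)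

lemma dot3_add_left (u u' v : Fin 3 → ℝ) : dot3 (u + u') v = dot3 u v + dot3 u' v := by
  simp [dot3, add_mul, Finset.sum_add_distrib]

lemma dot3_add_right (u v v' : Fin 3 → ℝ) : dot3 u (v + v') = dot3 u v + dot3 u v' := by
  simp [dot3, mul_add, Finset.sum_add_distrib]

lemma dot3_smul_left (a : ℝ) (u v : Fin 3 → ℝ) : dot3 (a • u) v = a * dot3 u v := by
  simp [dot3, Finset.mul_sum, mul_assoc]

lemma dot3_smul_right (a : ℝ) (u v : Fin 3 → ℝ) : dot3 u (a • v) = a * dot3 u v := by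
  simp [dot3, Finset.mul_sum, Fin.sum_univ_three]; ring

lemma cross3_add_left (u u' v : Fin 3 → ℝ) :
    cross3 (u + u') v = cross3 u v + cross3 u' v := by
  funext i; fin_cases i <;> simp [cross3] <;> ring

lemma cross3_add_right (u v v' : Fin 3 → ℝ) :
    cross3 u (v + v') = cross3 u v + cross3 u v' := by
  funext i; fin_cases i <;> simp [cross3] <;> ring

lemma cross3_smul_left (a : ℝ) (u v : Fin 3 → ℝ) :
    cross3 (a • u) v = a • cross3 u v := by
  funext i; fin_cases i <;> simp [cross3] <;> ring

lemma cross3_smul_right (a : ℝ) (u v : Fin 3 → ℝ) :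
    cross3 u (a • v) = a • cross3 u v := by
  funext i; fin_cases i <;> simp [cross3] <;> ring

lemma cross3_self (u : Fin 3 → ℝ) : cross3 u u = 0 := by
  funext i; fin_cases i <;> simp [cross3] <;> ring

lemma cross3_anticomm (u v : Fin 3 → ℝ) : cross3 u v = -cross3 v u := by
  funext i; fin_cases i <;> simp [cross3] <;> ring

lemma cross3_cross3 (a b c : Fin 3 → ℝ) :
    cross3 (cross3 a b) c = dot3 a c • b - dot3 b c • a := by
  funext i; fin_cases i <;> simp [cross3, dot3, Fin.sum_univ_three] <;> ring

theorem stmt2 (r l : ℝ) (hr : 0 < r) (hr1 : r ≤ 1) (hl : 0 < l)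
    (v₀ v₁ w : Fin 3 → ℝ)
    (h00 : dot3 v₀ v₀ = 1) (h11 : dot3 v₁ v₁ = 1) (hww : dot3 w w = 1)
    (h01 : dot3 v₀ v₁ = 0) (h0w : dot3 v₀ w = 0) (h1w : dot3 v₁ w = 0)
    (horient : cross3 v₁ v₀ = w) :
    let k₀ : ℝ := Real.sqrt (1 - r ^ 2) / r
    let α : ℝ → Fin 3 → ℝ := fun t =>
      Real.sqrt (1 - r ^ 2) • w + (r * Real.cos (l * t / r)) • v₁
        + (r * Real.sin (l * t / r)) • v₀
    (∀ t, norm3 (α t) = 1) ∧ (∀ t, norm3 (deriv α t) = l) ∧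
    (∀ t, deriv (deriv α) t
        = (norm3 (deriv α t) * k₀) • cross3 (α t) (deriv α t)
          - (norm3 (deriv α t)) ^ 2 • α t) := by
  intro k₀ α
  have hrne : r ≠ 0 := ne_of_gt hr
  have hr2 : (0:ℝ) ≤ 1 - r ^ 2 := by nlinarith
  have hs : Real.sqrt (1 - r ^ 2) ^ 2 = 1 - r ^ 2 := Real.sq_sqrt hr2
  set s : ℝ := Real.sqrt (1 - r ^ 2) with hs_def
  -- extra dot facts
  have h10 : dot3 v₁ v₀ = 0 := by rw [dot3, Fin.sum_univ_three] at h01 ⊢; linarith [h01]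
  have hw0 : dot3 w v₀ = 0 := by rw [dot3, Fin.sum_univ_three] at h0w ⊢; linarith [h0w]
  have hw1 : dot3 w v₁ = 0 := by rw [dot3, Fin.sum_univ_three] at h1w ⊢; linarith [h1w]
  -- cross products of basis vectors
  have hc01 : cross3 v₀ v₁ = -w := by rw [cross3_anticomm, horient]
  have hcw1 : cross3 w v₁ = v₀ := by
    rw [← horient, cross3_cross3, h11, h01, one_smul, zero_smul, sub_zero]
  have hcw0 : cross3 w v₀ = -v₁ := by
    rw [← horient, cross3_cross3, h10, h00, one_smul, zero_smul, zero_sub]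
  -- derivatives
  have hθ : ∀ t : ℝ, HasDerivAt (fun t : ℝ => l * t / r) (l / r) t := by
    intro t
    simpa using ((hasDerivAt_id t).const_mul l).div_const r
  set β : ℝ → Fin 3 → ℝ := fun t =>
    (-(l * Real.sin (l * t / r))) • v₁ + (l * Real.cos (l * t / r)) • v₀ with hβ_def
  have hα : ∀ t, HasDerivAt α (β t) t := by
    intro t
    have h1 := ((hθ t).cos.const_mul r).smul_const v₁
    have h2 := ((hθ t).sin.const_mul r).smul_const v₀
    have h := ((hasDerivAt_const t (s • w)).add h1).add h2
    have e1 : r * (-Real.sin (l * t / r) * (l / r)) = -(l * Real.sin (l * t / r)) := by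
      field_simp
    have e2 : r * (Real.cos (l * t / r) * (l / r)) = l * Real.cos (l * t / r) := by
      field_simp
    rw [e1, e2, zero_add] at h
    exact h
  have hderivα : deriv α = β := funext fun t => (hα t).deriv
  set γ : ℝ → Fin 3 → ℝ := fun t =>
    (-(l ^ 2 / r * Real.cos (l * t / r))) • v₁ + (-(l ^ 2 / r * Real.sin (l * t / r))) • v₀
    with hγ_def
  have hβ : ∀ t, HasDerivAt β (γ t) t := by
    intro t
    have h1 := (((hθ t).sin.const_mul l).neg).smul_const v₁
    have h2 := ((hθ t).cos.const_mul l).smul_const v₀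
    have h := h1.add h2
    have e1 : -(l * (Real.cos (l * t / r) * (l / r))) = -(l ^ 2 / r * Real.cos (l * t / r)) := by
      field_simp
    have e2 : l * (-Real.sin (l * t / r) * (l / r)) = -(l ^ 2 / r * Real.sin (l * t / r)) := by
      field_simp
    rw [e1, e2] at h
    exact h
  have hderivβ : deriv β = γ := funext fun t => (hβ t).deriv
  have hpyth : ∀ t : ℝ, Real.sin (l * t / r) ^ 2 + Real.cos (l * t / r) ^ 2 = 1 := fun t =>
    Real.sin_sq_add_cos_sq _
  refine ⟨?_, ?_, ?_⟩
  · intro t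
    have : dot3 (α t) (α t) = 1 := by
      simp only [α, dot3_add_left, dot3_add_right, dot3_smul_left, dot3_smul_right,
        h00, h11, hww, h01, h0w, h1w, h10, hw0, hw1]
      nlinarith [hpyth t, hs]
    rw [norm3, this, Real.sqrt_one]
  · intro t
    rw [hderivα]
    have : dot3 (β t) (β t) = l ^ 2 := by
      simp only [β, dot3_add_left, dot3_add_right, dot3_smul_left, dot3_smul_right,
        h00, h11, h01, h10]
      nlinarith [hpyth t]
    rw [norm3, this, Real.sqrt_sq hl.le]
  · intro t
    rw [hderivα, hderivβ]
    have hnorm : norm3 (β t) = l := by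
      have : dot3 (β t) (β t) = l ^ 2 := by
        simp only [β, dot3_add_left, dot3_add_right, dot3_smul_left, dot3_smul_right,
          h00, h11, h01, h10]
        nlinarith [hpyth t]
      rw [norm3, this, Real.sqrt_sq hl.le]
    rw [hnorm]
    simp only [α, β, γ, k₀, cross3_add_left, cross3_add_right, cross3_smul_left,
      cross3_smul_right, horient, hc01, hcw0, hcw1, cross3_self]
    rw [← hs_def]
    match_scalars
    · field_simp
      linear_combination (Real.cos (l * t / r)) * hs
    · field_simp
      linear_combination (Real.sin (l * t / r)) * hs
    · field_simp
      linear_combination (-(l ^ 2) * s) * hpyth t
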